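/- arXiv:2510.11025 — 5 statements merged into one kernel-verified Lean document; each statement's English description precedes it below -/
import Mathlib

section
/- Let H be a bounded self-adjoint operator on a complex Hilbert space ℋ, let 𝒦 be a complex Hilbert space, let F : ℋ → 𝒦 be a bounded linear operator, let λ ∈ ℝ, and let P be the orthogonal projection onto the eigenspace ker(H − λ·I). Then for every y > 0, the operator norm of the sandwiched resolvent satisfies ‖F ∘ (H − (λ+iy)·I)⁻¹ ∘ F*‖ ≥ ‖F ∘ P‖² / y. -/
open ContinuousLinearMap Filter Topology
local notation "⟪" x ", " y "⟫" => @inner ℂ _ _ x y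

/-- For a bounded self-adjoint operator `H`, a bounded operator `F : ℋ → 𝒦`, a real `lam`,
and the orthogonal projection `P` onto `ker (H - lam)`, for every `y > 0` the operator norm
of the sandwiched resolvent satisfies `‖F (H - (lam + i y))⁻¹ F*‖ ≥ ‖F ∘ P‖² / y`. -/
theorem sandwiched_resolvent_norm_lower_bound
    {ℋ : Type*} [NormedAddCommGroup ℋ] [InnerProductSpace ℂ ℋ] [CompleteSpace ℋ]
    {𝒦 : Type*} [NormedAddCommGroup 𝒦] [InnerProductSpace ℂ 𝒦] [CompleteSpace 𝒦]
    (H : ℋ →L[ℂ] ℋ) (hH : IsSelfAdjoint H) (F : ℋ →L[ℂ] 𝒦) (lam : ℝ)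
    (P : ℋ →L[ℂ] ℋ)
    (hP : P = (LinearMap.ker ((H - (lam : ℂ) • (1 : ℋ →L[ℂ] ℋ) : ℋ →L[ℂ] ℋ) : ℋ →ₗ[ℂ] ℋ)).subtypeL ∘L
        Submodule.orthogonalProjectionOnto
          (LinearMap.ker ((H - (lam : ℂ) • (1 : ℋ →L[ℂ] ℋ) : ℋ →L[ℂ] ℋ) : ℋ →ₗ[ℂ] ℋ))) :
    ∀ y : ℝ, 0 < y →
      ‖F ∘L P‖ ^ 2 / y ≤
        ‖F ∘L Ring.inverse (H - ((lam : ℂ) + y * Complex.I) • (1 : ℋ →L[ℂ] ℋ)) ∘L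
          adjoint F‖ := by
  intro y hy
  set z : ℂ := (lam : ℂ) + y * Complex.I with hz
  have hzim : z.im = y := by simp [hz]
  set K := LinearMap.ker ((H - (lam : ℂ) • (1 : ℋ →L[ℂ] ℋ) : ℋ →L[ℂ] ℋ) : ℋ →ₗ[ℂ] ℋ) with hK
  set A : ℋ →L[ℂ] ℋ := H - z • 1 with hAdef
  -- invertibility of A
  have hzspec : z ∉ spectrum ℂ H := by
    intro hmem
    have h1 := hH.mem_spectrum_eq_re hmem
    have h2 : z.im = 0 := by rw [h1]; simp
    rw [hzim] at h2
    exact hy.ne' h2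
  have hA : IsUnit A := by
    have h1 : IsUnit ((algebraMap ℂ (ℋ →L[ℂ] ℋ)) z - H) := spectrum.notMem_iff.mp hzspec
    have h2 : A = -((algebraMap ℂ (ℋ →L[ℂ] ℋ)) z - H) := by
      rw [Algebra.algebraMap_eq_smul_one, neg_sub, hAdef]
    rw [h2]
    exact h1.neg
  set R : ℋ →L[ℂ] ℋ := Ring.inverse A with hRdef
  have hAR : A * R = 1 := Ring.mul_inverse_cancel A hA
  set T := F ∘L R ∘L adjoint F with hTdef
  -- adjoints
  have hPsa : ContinuousLinearMap.adjoint P = P := by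
    rw [hP]; exact isSelfAdjoint_iff'.mp (isSelfAdjoint_starProjection K)
  have hHadj : ContinuousLinearMap.adjoint H = H := isSelfAdjoint_iff'.mp hH
  have hAadj : ContinuousLinearMap.adjoint A = H - (starRingEnd ℂ z) • 1 := by
    rw [← ContinuousLinearMap.star_eq_adjoint, hAdef, star_sub, star_smul, star_one,
      hH.star_eq]
    rfl
  have hTnn : (0 : ℝ) ≤ y * ‖T‖ := mul_nonneg hy.le (norm_nonneg _)
  -- pointwise estimate
  have key : ∀ u : 𝒦, ‖(P ∘L adjoint F) u‖ ≤ Real.sqrt (y * ‖T‖) * ‖u‖ := by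
    intro u
    set v : ℋ := adjoint F u with hv
    set w : ℋ := R v with hw
    have hAw : A w = v := by
      have := congrArg (fun S : ℋ →L[ℂ] ℋ => S v) hAR
      simpa [ContinuousLinearMap.mul_apply] using this
    -- imaginary part identity
    have h1 : ⟪u, T u⟫ = ⟪v, w⟫ := by
      have : T u = F w := rfl
      rw [this, ← adjoint_inner_left F w u]
    have h2 : (⟪v, w⟫).im = y * ‖w‖ ^ 2 := by
      have hHww : (⟪H w, w⟫).im = 0 := by
        have hc : (starRingEnd ℂ) ⟪H w, w⟫ = ⟪H w, w⟫ := by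
          rw [inner_conj_symm, ← adjoint_inner_left H w w, hHadj]
        rw [← Complex.conj_eq_iff_im]
        exact hc
      have : ⟪v, w⟫ = ⟪H w, w⟫ - (starRingEnd ℂ z) * ((‖w‖ : ℂ) ^ 2) := by
        rw [← hAw]
        have : A w = H w - z • w := by
          simp [hAdef, ContinuousLinearMap.sub_apply, ContinuousLinearMap.smul_apply]
        rw [this, inner_sub_left, inner_smul_left, inner_self_eq_norm_sq_to_K]
        norm_cast
      rw [this]
      simp only [Complex.sub_im, Complex.mul_im]
      have h3 : ((‖w‖ : ℂ) ^ 2).im = 0 := by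
        norm_cast
      have h4 : ((‖w‖ : ℂ) ^ 2).re = ‖w‖ ^ 2 := by
        norm_cast
      rw [hHww, h3, h4]
      simp [Complex.conj_im, hzim]
    have h3 : y * ‖w‖ ^ 2 ≤ ‖T‖ * ‖u‖ ^ 2 := by
      calc y * ‖w‖ ^ 2 = (⟪u, T u⟫).im := by rw [h1, h2]
        _ ≤ ‖⟪u, T u⟫‖ := Complex.im_le_norm _
        _ = ‖⟪u, T u⟫‖ := rfl
        _ ≤ ‖u‖ * ‖T u‖ := norm_inner_le_norm _ _
        _ ≤ ‖u‖ * (‖T‖ * ‖u‖) := by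
            exact mul_le_mul_of_nonneg_left (T.le_opNorm u) (norm_nonneg u)
        _ = ‖T‖ * ‖u‖ ^ 2 := by ring
    -- projection estimate
    have hPvK : P v ∈ K := by
      rw [hP]
      exact Submodule.coe_mem (K.orthogonalProjectionOnto v)
    have hHPv : H (P v) = (lam : ℂ) • P v := by
      have := hPvK
      rw [hK, LinearMap.mem_ker] at this
      have h5 : H (P v) - (lam : ℂ) • P v = 0 := by
        simpa [ContinuousLinearMap.sub_apply, ContinuousLinearMap.smul_apply] using this
      linear_combination (norm := module) h5
    have hPP : P (P v) = P v := by
      have hproj : K.orthogonalProjectionOnto (P v) = ⟨P v, hPvK⟩ :=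
        Submodule.orthogonalProjectionOnto_mem_subspace_eq_self (⟨P v, hPvK⟩ : K)
      nth_rewrite 1 [hP]
      rw [ContinuousLinearMap.comp_apply, hproj]
      rfl
    have h6 : ⟪P v, v⟫ = ((lam : ℂ) - z) * ⟪P v, w⟫ := by
      have hAadjPv : ContinuousLinearMap.adjoint A (P v) =
          ((lam : ℂ) - starRingEnd ℂ z) • P v := by
        rw [hAadj]
        simp [ContinuousLinearMap.sub_apply, ContinuousLinearMap.smul_apply, hHPv, sub_smul]
      calc ⟪P v, v⟫ = ⟪P v, A w⟫ := by rw [hAw]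
        _ = ⟪ContinuousLinearMap.adjoint A (P v), w⟫ := (adjoint_inner_left A w (P v)).symm
        _ = ⟪((lam : ℂ) - starRingEnd ℂ z) • P v, w⟫ := by rw [hAadjPv]
        _ = ((lam : ℂ) - z) * ⟪P v, w⟫ := by
            rw [inner_smul_left]
            simp [map_sub]
    have h7 : ⟪P v, v⟫ = ((‖P v‖ : ℂ) ^ 2) := by
      calc ⟪P v, v⟫ = ⟪P (P v), v⟫ := by rw [hPP]
        _ = ⟪ContinuousLinearMap.adjoint P (P v), v⟫ := by rw [hPsa]
        _ = ⟪P v, P v⟫ := adjoint_inner_left P v (P v)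
        _ = ((‖P v‖ : ℂ) ^ 2) := inner_self_eq_norm_sq_to_K _
    have habs : ‖(lam : ℂ) - z‖ = y := by
      have : (lam : ℂ) - z = -(y * Complex.I) := by rw [hz]; ring
      rw [this]
      simp [abs_of_pos hy]
    have h8 : ‖P v‖ ^ 2 ≤ y * (‖P v‖ * ‖w‖) := by
      have : (‖P v‖ : ℝ) ^ 2 = ‖((lam : ℂ) - z) * ⟪P v, w⟫‖ := by
        rw [← h6, h7]
        rw [norm_pow]
        simp
      rw [this, norm_mul, habs]
      have hn : ‖⟪P v, w⟫‖ ≤ ‖P v‖ * ‖w‖ := by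
        exact norm_inner_le_norm _ _
      exact mul_le_mul_of_nonneg_left hn hy.le
    have h9 : ‖P v‖ ≤ y * ‖w‖ := by
      rcases eq_or_lt_of_le (norm_nonneg (P v)) with h | h
      · rw [← h]; positivity
      · have := (mul_le_mul_iff_left₀ h).mp (by linarith [h8] : ‖P v‖ * ‖P v‖ ≤ (y * ‖w‖) * ‖P v‖)
        linarith
    have h10 : ‖P v‖ ^ 2 ≤ (y * ‖T‖) * ‖u‖ ^ 2 := by
      calc ‖P v‖ ^ 2 ≤ (y * ‖w‖) ^ 2 := by
            apply pow_le_pow_left₀ (norm_nonneg _) h9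
        _ = y * (y * ‖w‖ ^ 2) := by ring
        _ ≤ y * (‖T‖ * ‖u‖ ^ 2) := by
            exact mul_le_mul_of_nonneg_left h3 hy.le
        _ = (y * ‖T‖) * ‖u‖ ^ 2 := by ring
    have : (P ∘L adjoint F) u = P v := rfl
    rw [this]
    have := Real.sqrt_le_sqrt h10
    rw [Real.sqrt_sq (norm_nonneg _)] at this
    calc ‖P v‖ ≤ Real.sqrt ((y * ‖T‖) * ‖u‖ ^ 2) := this
      _ = Real.sqrt (y * ‖T‖) * ‖u‖ := by
          rw [Real.sqrt_mul hTnn, Real.sqrt_sq (norm_nonneg _)]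
  have hX : ‖P ∘L adjoint F‖ ≤ Real.sqrt (y * ‖T‖) :=
    opNorm_le_bound _ (Real.sqrt_nonneg _) key
  have hFP : ‖F ∘L P‖ = ‖P ∘L adjoint F‖ := by
    rw [← ContinuousLinearMap.adjoint.norm_map (F ∘L P), adjoint_comp, hPsa]
  have hsq : ‖F ∘L P‖ ^ 2 ≤ y * ‖T‖ := by
    rw [hFP]
    calc ‖P ∘L adjoint F‖ ^ 2 ≤ Real.sqrt (y * ‖T‖) ^ 2 :=
          pow_le_pow_left₀ (norm_nonneg _) hX 2
      _ = y * ‖T‖ := Real.sq_sqrt hTnn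
  rw [div_le_iff₀ hy]
  calc ‖F ∘L P‖ ^ 2 ≤ y * ‖T‖ := hsq
    _ = ‖T‖ * y := by ring
end

section
/- Let H be a bounded self-adjoint operator on a complex Hilbert space ℋ, let 𝒦 be a complex Hilbert space, let F : ℋ → 𝒦 be a bounded linear operator, let λ ∈ ℝ be an eigenvalue of H, and let P be the orthogonal projection onto ker(H − λ·I). If F ∘ P ≠ 0, then ‖F ∘ (H − (λ+iy)·I)⁻¹ ∘ F*‖ tends to +∞ as y → 0 from the right. -/
open ContinuousLinearMap Filter Topology

set_option maxHeartbeats 1000000 in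
/-- If `lam` is an eigenvalue of the bounded self-adjoint operator `H`, `P` is the orthogonal
projection onto `ker (H - lam)`, and `F ∘ P ≠ 0`, then the operator norm of the sandwiched
resolvent `F (H - (lam + i y))⁻¹ F*` blows up as `y → 0⁺`. -/
theorem sandwiched_resolvent_norm_tendsto_atTop
    {ℋ : Type*} [NormedAddCommGroup ℋ] [InnerProductSpace ℂ ℋ] [CompleteSpace ℋ]
    {𝒦 : Type*} [NormedAddCommGroup 𝒦] [InnerProductSpace ℂ 𝒦] [CompleteSpace 𝒦]
    (H : ℋ →L[ℂ] ℋ) (hH : IsSelfAdjoint H) (F : ℋ →L[ℂ] 𝒦) (lam : ℝ)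
    (heig : LinearMap.ker ((H - (lam : ℂ) • (1 : ℋ →L[ℂ] ℋ) : ℋ →L[ℂ] ℋ) : ℋ →ₗ[ℂ] ℋ) ≠ ⊥)
    (P : ℋ →L[ℂ] ℋ)
    (hP : P = (LinearMap.ker ((H - (lam : ℂ) • (1 : ℋ →L[ℂ] ℋ) : ℋ →L[ℂ] ℋ) : ℋ →ₗ[ℂ] ℋ)).subtypeL ∘L
        Submodule.orthogonalProjectionOnto (LinearMap.ker ((H - (lam : ℂ) • (1 : ℋ →L[ℂ] ℋ) : ℋ →L[ℂ] ℋ) : ℋ →ₗ[ℂ] ℋ)))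
    (hFP : F ∘L P ≠ 0) :
    Tendsto
      (fun y : ℝ =>
        ‖F ∘L Ring.inverse (H - ((lam : ℂ) + y * Complex.I) • (1 : ℋ →L[ℂ] ℋ)) ∘L adjoint F‖)
      (𝓝[>] 0) atTop := by
  set K := LinearMap.ker ((H - (lam : ℂ) • (1 : ℋ →L[ℂ] ℋ) : ℋ →L[ℂ] ℋ) : ℋ →ₗ[ℂ] ℋ) with hK
  -- P is self-adjoint
  have hPsa : IsSelfAdjoint P := by rw [hP]; exact isSelfAdjoint_starProjection K
  have hPadj : adjoint P = P := by
    rw [← ContinuousLinearMap.star_eq_adjoint]; exact hPsa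
  have hHadj : adjoint H = H := by
    rw [← ContinuousLinearMap.star_eq_adjoint]; exact hH
  -- P maps into K and fixes K
  have hPmem : ∀ x : ℋ, P x ∈ K := by
    intro x; rw [hP]; exact (K.orthogonalProjectionOnto x).2
  have hPfix : ∀ x : ℋ, x ∈ K → P x = x := by
    intro x hx
    rw [hP]
    exact K.starProjection_eq_self_iff.mpr hx
  -- find w with P (adjoint F w) ≠ 0
  have hadj : ∃ w : 𝒦, P (adjoint F w) ≠ 0 := by
    by_contra h
    push_neg at h
    apply hFP
    have h0 : P ∘L adjoint F = 0 := by ext w; exact h w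
    have : adjoint (F ∘L P) = 0 := by
      rw [ContinuousLinearMap.adjoint_comp, hPadj, h0]
    have h3 : F ∘L P = adjoint (0 : 𝒦 →L[ℂ] ℋ) := by rw [← this, adjoint_adjoint]
    rw [h3]
    ext x
    simp [ContinuousLinearMap.adjoint_inner_left]
  obtain ⟨w, hw⟩ := hadj
  set u : ℋ := adjoint F w with hu
  have hwne : w ≠ 0 := by
    intro h; apply hw; simp [hu, h]
  have hPu : (0:ℝ) < ‖P u‖ := norm_pos_iff.mpr hw
  have hwpos : (0:ℝ) < ‖w‖ := norm_pos_iff.mpr hwne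
  set c : ℝ := ‖P u‖ ^ 2 / ‖w‖ ^ 2 with hc
  have hcpos : 0 < c := div_pos (pow_pos hPu 2) (pow_pos hwpos 2)
  -- lower bound for each y > 0
  have key : ∀ y : ℝ, 0 < y →
      c / y ≤ ‖F ∘L Ring.inverse (H - ((lam : ℂ) + y * Complex.I) • (1 : ℋ →L[ℂ] ℋ)) ∘L
        adjoint F‖ := by
    intro y hy
    set z : ℂ := (lam : ℂ) + y * Complex.I with hz
    have hzim : z.im = y := by simp [hz]
    set A : ℋ →L[ℂ] ℋ := H - z • (1 : ℋ →L[ℂ] ℋ) with hA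
    -- A is a unit
    have hnotspec : z ∉ spectrum ℂ H := by
      intro hmem
      have := hH.mem_spectrum_eq_re hmem
      apply_fun Complex.im at this
      simp [hzim] at this
      exact hy.ne' this
    have hunit : IsUnit A := by
      have h1 : IsUnit (algebraMap ℂ (ℋ →L[ℂ] ℋ) z - H) := spectrum.notMem_iff.mp hnotspec
      have h2 : A = -(algebraMap ℂ (ℋ →L[ℂ] ℋ) z - H) := by
        rw [Algebra.algebraMap_eq_smul_one, neg_sub]
      rw [h2]; exact h1.neg
    set R : ℋ →L[ℂ] ℋ := Ring.inverse A with hR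
    have hAR : A ∘L R = 1 := by
      rw [← ContinuousLinearMap.mul_def, Ring.mul_inverse_cancel _ hunit]
    set g : ℋ := R u with hg
    have hAg : A g = u := by
      have := congrArg (fun T : ℋ →L[ℂ] ℋ => T u) hAR
      simpa [ContinuousLinearMap.comp_apply] using this
    -- Claim 1: im ⟪u, g⟫ = y * ‖g‖²
    have hHg_real : (inner ℂ (H g) g : ℂ).im = 0 := by
      have h1 : (inner ℂ (H g) g : ℂ) = inner ℂ g (H g) := by
        conv_lhs => rw [← hHadj]
        rw [ContinuousLinearMap.adjoint_inner_left]
      have h2 : (inner ℂ g (H g) : ℂ) = starRingEnd ℂ (inner ℂ (H g) g) :=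
        (inner_conj_symm g (H g)).symm
      have := h1.trans h2
      have him := congrArg Complex.im this
      rw [Complex.conj_im] at him
      linarith
    have him : (inner ℂ u g : ℂ).im = y * ‖g‖ ^ 2 := by
      have hexp : (inner ℂ u g : ℂ) = inner ℂ (H g) g - (starRingEnd ℂ z) * (‖g‖:ℂ) ^ 2 := by
        rw [← hAg]
        have hgg : (inner ℂ g g : ℂ) = (‖g‖ : ℂ) ^ 2 := inner_self_eq_norm_sq_to_K g
        simp only [hA, ContinuousLinearMap.sub_apply, ContinuousLinearMap.smul_apply,
          ContinuousLinearMap.one_apply, inner_sub_left, inner_smul_left, hgg]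
      rw [hexp]
      simp only [Complex.sub_im, Complex.mul_im, Complex.conj_re, Complex.conj_im, hzim,
        hHg_real, ← Complex.ofReal_pow, Complex.ofReal_re, Complex.ofReal_im]
      ring
    -- Claim 2: ‖P u‖ ≤ y * ‖g‖
    have hPuK : P u ∈ K := hPmem u
    have hinner_vu : ∀ v : ℋ, v ∈ K → (inner ℂ v u : ℂ) = ((lam : ℂ) - z) * inner ℂ v g := by
      intro v hv
      have hHv' : H v = (lam : ℂ) • v := by
        rw [hK, LinearMap.mem_ker] at hv
        have h2 : (H - (lam:ℂ) • (1 : ℋ →L[ℂ] ℋ)) v = 0 := hv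
        simp only [ContinuousLinearMap.sub_apply, ContinuousLinearMap.smul_apply,
          ContinuousLinearMap.one_apply, sub_eq_zero] at h2
        exact h2
      rw [← hAg]
      simp only [hA, ContinuousLinearMap.sub_apply, ContinuousLinearMap.smul_apply,
        ContinuousLinearMap.one_apply, inner_sub_right, inner_smul_right]
      have hvh : (inner ℂ v (H g) : ℂ) = inner ℂ (H v) g := by
        conv_rhs => rw [← hHadj]
        rw [ContinuousLinearMap.adjoint_inner_left]
      rw [hvh, hHv', inner_smul_left, Complex.conj_ofReal]
      ring
    have hvu_norm : (inner ℂ (P u) u : ℂ) = (‖P u‖ : ℂ) ^ 2 := by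
      have e1 : (inner ℂ (P u) u : ℂ) = inner ℂ u (P u) := by
        conv_lhs => rw [← hPadj]
        exact ContinuousLinearMap.adjoint_inner_left P u u
      have e2 : (inner ℂ u (P u) : ℂ) = inner ℂ u (P (P u)) := by
        rw [hPfix (P u) hPuK]
      have e3 : (inner ℂ u (P (P u)) : ℂ) = inner ℂ (adjoint P u) (P u) :=
        (ContinuousLinearMap.adjoint_inner_left P (P u) u).symm
      rw [e1, e2, e3, hPadj]
      exact inner_self_eq_norm_sq_to_K (P u)
    have hlamz : (lam : ℂ) - z = -(y * Complex.I) := by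
      rw [hz]; ring
    have hPu_le : ‖P u‖ ^ 2 ≤ y * (‖P u‖ * ‖g‖) := by
      have habs := congrArg (‖·‖) (hvu_norm.symm.trans (hinner_vu (P u) hPuK))
      rw [hlamz] at habs
      have h1 : ‖((‖P u‖ : ℂ) ^ 2)‖ = ‖P u‖ ^ 2 := by
        rw [← Complex.ofReal_pow, Complex.norm_real, Real.norm_of_nonneg (by positivity)]
      have h2 : ‖(-(y * Complex.I) * inner ℂ (P u) g)‖ =
          y * ‖(inner ℂ (P u) g)‖ := by
        simp [abs_of_nonneg hy.le]
      rw [h1, h2] at habs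
      have h3 : ‖(inner ℂ (P u) g : ℂ)‖ ≤ ‖P u‖ * ‖g‖ := by
        simpa using norm_inner_le_norm (𝕜 := ℂ) (P u) g
      calc ‖P u‖ ^ 2 = y * ‖(inner ℂ (P u) g : ℂ)‖ := habs
        _ ≤ y * (‖P u‖ * ‖g‖) := by
            exact mul_le_mul_of_nonneg_left h3 hy.le
    have hg_ge : ‖P u‖ / y ≤ ‖g‖ := by
      rw [div_le_iff₀ hy]
      nlinarith [hPu]
    -- combine
    set T : 𝒦 →L[ℂ] 𝒦 := F ∘L R ∘L adjoint F with hT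
    have hTw : T w = F g := by
      simp [hT, hg, hu, ContinuousLinearMap.comp_apply]
    have hinnerT : (inner ℂ w (T w) : ℂ) = inner ℂ u g := by
      rw [hTw, hu, ← ContinuousLinearMap.adjoint_inner_left]
    have hlow : ‖P u‖ ^ 2 / y ≤ ‖(inner ℂ w (T w) : ℂ)‖ := by
      rw [hinnerT]
      have h1 : y * ‖g‖ ^ 2 ≤ ‖(inner ℂ u g : ℂ)‖ := by
        rw [← him]
        exact le_trans (le_abs_self _) (Complex.abs_im_le_norm _)
      have h2 : ‖P u‖ ^ 2 / y ≤ y * ‖g‖ ^ 2 := by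
        rw [div_le_iff₀ hy]
        have := hg_ge
        rw [div_le_iff₀ hy] at this
        nlinarith [norm_nonneg g, hPu]
      linarith
    have hup : ‖(inner ℂ w (T w) : ℂ)‖ ≤ ‖T‖ * ‖w‖ ^ 2 := by
      calc ‖(inner ℂ w (T w) : ℂ)‖ ≤ ‖w‖ * ‖T w‖ := by
            simpa using norm_inner_le_norm (𝕜 := ℂ) w (T w)
        _ ≤ ‖w‖ * (‖T‖ * ‖w‖) := by
            exact mul_le_mul_of_nonneg_left (T.le_opNorm w) (norm_nonneg w)
        _ = ‖T‖ * ‖w‖ ^ 2 := by ring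
    have hfin : ‖P u‖ ^ 2 / y ≤ ‖T‖ * ‖w‖ ^ 2 := le_trans hlow hup
    have h4 : ‖P u‖ ^ 2 ≤ ‖T‖ * ‖w‖ ^ 2 * y := (div_le_iff₀ hy).mp hfin
    rw [div_le_iff₀ hy, hc, div_le_iff₀ (pow_pos hwpos 2)]
    nlinarith [h4]
  -- conclude
  have hdiv : Tendsto (fun y : ℝ => c / y) (𝓝[>] (0:ℝ)) atTop := by
    simpa [div_eq_mul_inv] using tendsto_inv_nhdsGT_zero.const_mul_atTop hcpos
  apply tendsto_atTop_mono' _ _ hdiv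
  filter_upwards [self_mem_nhdsWithin] with y hy
  exact key y hy
end

section
/- Let H be a bounded self-adjoint operator on a complex Hilbert space ℋ and let λ be an isolated point of the spectrum of H, i.e. λ ∈ spectrum(H) and there exists ε > 0 such that spectrum(H) ∩ (λ−ε, λ+ε) = {λ}. Then λ is an eigenvalue of H: ker(H − λ·I) ≠ {0}. -/
open ContinuousLinearMap Filter Topology

/-- An isolated point `lam` of the spectrum of a bounded self-adjoint operator `H` on a
nontrivial complex Hilbert space is an eigenvalue: `ker (H - lam) ≠ ⊥`. -/
theorem isolated_spectral_point_is_eigenvalue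
    {ℋ : Type*} [NormedAddCommGroup ℋ] [InnerProductSpace ℂ ℋ] [CompleteSpace ℋ]
    [Nontrivial ℋ]
    (H : ℋ →L[ℂ] ℋ) (hH : IsSelfAdjoint H) (lam : ℝ)
    (hmem : (lam : ℂ) ∈ spectrum ℂ H)
    (hiso : ∃ ε > 0,
      spectrum ℂ H ∩ (Complex.ofReal '' Set.Ioo (lam - ε) (lam + ε)) = {(lam : ℂ)}) :
    LinearMap.ker ((H - (lam : ℂ) • (1 : ℋ →L[ℂ] ℋ) : ℋ →L[ℂ] ℋ) : ℋ →ₗ[ℂ] ℋ) ≠ ⊥ := by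
  obtain ⟨ε, hε, hspec⟩ := hiso
  have hmemR : lam ∈ spectrum ℝ H := spectrum.of_algebraMap_mem ℂ hmem
  -- real spectrum isolation
  have hIoo : ∀ x ∈ spectrum ℝ H, x ∈ Set.Ioo (lam - ε) (lam + ε) → x = lam := by
    intro x hx hx'
    have : (x : ℂ) ∈ spectrum ℂ H ∩ (Complex.ofReal '' Set.Ioo (lam - ε) (lam + ε)) :=
      ⟨spectrum.algebraMap_mem ℂ hx, ⟨x, hx', rfl⟩⟩
    rw [hspec] at this
    exact Complex.ofReal_inj.mp this
  set f : ℝ → ℝ := Set.indicator {lam} 1 with hf_def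
  have hf : ContinuousOn f (spectrum ℝ H) := by
    intro x hx
    rcases eq_or_ne x lam with rfl | hne
    · apply ContinuousWithinAt.congr_of_eventuallyEq
        (continuousWithinAt_const : ContinuousWithinAt (fun _ => (1:ℝ)) _ _)
      · filter_upwards [inter_mem_nhdsWithin (spectrum ℝ H)
          (Ioo_mem_nhds (show x - ε < x by linarith) (show x < x + ε by linarith))] with y hy
        have := hIoo y hy.1 hy.2
        simp [hf_def, this]
      · simp [hf_def]
    · apply ContinuousWithinAt.congr_of_eventuallyEq
        (continuousWithinAt_const : ContinuousWithinAt (fun _ => (0:ℝ)) _ _)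
      · filter_upwards [eventually_nhdsWithin_of_eventually_nhds
          (eventually_ne_nhds hne)] with y hy
        simp [hf_def, hy]
      · simp [hf_def, hne]
  set P := cfc f H with hP_def
  have hmul : (fun x : ℝ => (x - lam) * f x) = 0 := by
    funext x
    rcases eq_or_ne x lam with rfl | hne
    · simp
    · simp [hf_def, hne]
  have key : (H - (lam : ℂ) • (1 : ℋ →L[ℂ] ℋ)) * P = 0 := by
    have h1 : cfc (fun x : ℝ => (x - lam) * f x) H = 0 := by
      rw [hmul]; exact cfc_zero ℝ H
    rw [cfc_mul _ _ H (by fun_prop) hf] at h1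
    rw [cfc_sub _ _ H (by fun_prop) (by fun_prop)] at h1
    rw [cfc_id' ℝ H, cfc_const lam H] at h1
    have : algebraMap ℝ (ℋ →L[ℂ] ℋ) lam = (lam : ℂ) • (1 : ℋ →L[ℂ] ℋ) := by
      rw [Algebra.algebraMap_eq_smul_one]
      norm_cast
    rw [this] at h1
    exact h1
  have hPne : P ≠ 0 := by
    intro h
    have h1 : (1 : ℝ) ∈ spectrum ℝ P := by
      rw [hP_def, cfc_map_spectrum (f := f) (a := H) hH hf]
      exact ⟨lam, hmemR, by simp [hf_def]⟩
    rw [h] at h1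
    rw [spectrum.zero_eq] at h1
    simp at h1
  obtain ⟨x, hx⟩ : ∃ x, P x ≠ 0 := by
    by_contra h
    push_neg at h
    exact hPne (ContinuousLinearMap.ext fun x => by simp [h x])
  intro hker
  have : P x ∈ LinearMap.ker ((H - (lam : ℂ) • (1 : ℋ →L[ℂ] ℋ) : ℋ →L[ℂ] ℋ) : ℋ →ₗ[ℂ] ℋ) := by
    rw [LinearMap.mem_ker]
    have := congrFun (congrArg DFunLike.coe key) x
    simpa using this
  rw [hker] at this
  exact hx (by simpa using this)
end

section
/- Let H be a bounded self-adjoint operator on a complex Hilbert space ℋ and let λ be an isolated point of the spectrum of H. Let V = ker(H − λ·I) be the eigenspace at λ and let K = V⊥ be its orthogonal complement. Then K is invariant under H, and λ does not belong to the spectrum of the restriction of H to K (viewed as a bounded operator on the Hilbert space K). -/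
open ContinuousLinearMap Filter Topology
open scoped ComplexInnerProductSpace

/-- If `lam` is an isolated point of the spectrum of the bounded self-adjoint operator `H`,
`V = ker (H - lam)` and `K = Vᗮ`, then `K` is invariant under `H` and `lam` is not in the
spectrum of the restriction of `H` to `K`. -/
theorem isolated_eigenvalue_not_in_spectrum_of_restriction
    {ℋ : Type*} [NormedAddCommGroup ℋ] [InnerProductSpace ℂ ℋ] [CompleteSpace ℋ]
    (H : ℋ →L[ℂ] ℋ) (hH : IsSelfAdjoint H) (lam : ℝ)
    (hmem : (lam : ℂ) ∈ spectrum ℂ H)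
    (hiso : ∃ ε > 0,
      spectrum ℂ H ∩ (Complex.ofReal '' Set.Ioo (lam - ε) (lam + ε)) = {(lam : ℂ)})
    (V K : Submodule ℂ ℋ)
    (hV : V = LinearMap.ker ((H - (lam : ℂ) • (1 : ℋ →L[ℂ] ℋ) : ℋ →L[ℂ] ℋ) : ℋ →ₗ[ℂ] ℋ))
    (hK : K = Vᗮ) :
    (∀ x ∈ K, H x ∈ K) ∧
    ∀ H' : K →L[ℂ] K, (∀ x : K, (H' x : ℋ) = H x) → (lam : ℂ) ∉ spectrum ℂ H' := by
  obtain ⟨ε, hε, hspec⟩ := hiso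
  haveI : CompleteSpace K := by rw [hK]; infer_instance
  -- membership in V
  have hmemV : ∀ v : ℋ, v ∈ V ↔ H v = (lam : ℂ) • v := by
    intro v
    rw [hV, LinearMap.mem_ker]
    simp only [ContinuousLinearMap.coe_coe, ContinuousLinearMap.sub_apply, ContinuousLinearMap.smul_apply,
      ContinuousLinearMap.one_apply, sub_eq_zero]
  have hsymm : ∀ x y : ℋ, ⟪H x, y⟫ = ⟪x, H y⟫ := hH.isSymmetric
  -- a symmetric operator mapping V into V maps K into K
  have key : ∀ T : ℋ →L[ℂ] ℋ, (∀ x y : ℋ, ⟪T x, y⟫ = ⟪x, T y⟫) →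
      (∀ v ∈ V, T v ∈ V) → ∀ x ∈ K, T x ∈ K := by
    intro T hsym hTV x hx
    rw [hK, Submodule.mem_orthogonal] at hx ⊢
    intro v hv
    rw [← hsym v x]
    exact hx (T v) (hTV v hv)
  -- H maps V into V
  have hHV : ∀ v ∈ V, H v ∈ V := by
    intro v hv
    rw [hmemV] at hv ⊢
    rw [hv, map_smul, hv]
  have hinv : ∀ x ∈ K, H x ∈ K := key H hsymm hHV
  refine ⟨hinv, ?_⟩
  intro H' hcoe
  -- functional calculus setup
  set q : ℝ → ℝ := fun t => max ((lam - t) ^ 2) ((ε / 2) ^ 2) with hq_def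
  have hqpos : ∀ t, 0 < q t := fun t => lt_max_of_lt_right (by positivity)
  have hqc : Continuous q := (((continuous_const.sub continuous_id).pow 2).max continuous_const)
  set h : ℝ → ℝ := fun t => (lam - t) / q t with hh_def
  set m : ℝ → ℝ := fun t => (lam - t) ^ 2 / q t with hm_def
  have hhc : Continuous h := ((continuous_const.sub continuous_id).div hqc fun t => (hqpos t).ne')
  have hmc : Continuous m := (((continuous_const.sub continuous_id).pow 2).div hqc
    fun t => (hqpos t).ne')
  -- spectrum gap
  have hgap : ∀ t ∈ spectrum ℝ H, t ≠ lam → ε ≤ |lam - t| := by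
    intro t ht hne
    by_contra hlt
    push_neg at hlt
    have htC : (t : ℂ) ∈ spectrum ℂ H := by
      have := spectrum.algebraMap_mem ℂ ht
      rwa [Complex.coe_algebraMap] at this
    have habs := abs_lt.mp hlt
    have : (t : ℂ) ∈ spectrum ℂ H ∩ (Complex.ofReal '' Set.Ioo (lam - ε) (lam + ε)) := by
      refine ⟨htC, ⟨t, ⟨by linarith [habs.2], by linarith [habs.1]⟩, rfl⟩⟩
    rw [hspec] at this
    exact hne (Complex.ofReal_injective this)
  have hm1 : ∀ t ∈ spectrum ℝ H, t ≠ lam → m t = 1 := by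
    intro t ht hne
    have h1 : (ε / 2) ^ 2 ≤ (lam - t) ^ 2 := by
      have := hgap t ht hne
      have h2 : (ε / 2) ≤ |lam - t| := by linarith
      calc (ε / 2) ^ 2 ≤ |lam - t| ^ 2 := by
            apply sq_le_sq' <;> [linarith [abs_nonneg (lam - t)]; exact h2]
        _ = (lam - t) ^ 2 := sq_abs _
    have hq_eq : q t = (lam - t) ^ 2 := max_eq_left h1
    have hpos : (0:ℝ) < (lam - t) ^ 2 := by
      have : lam - t ≠ 0 := sub_ne_zero.mpr (Ne.symm hne)
      positivity
    rw [hm_def]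
    simp only
    rw [hq_eq, div_self hpos.ne']
  -- key operator identities
  have hE : cfc (fun t : ℝ => lam - t) H = algebraMap ℝ (ℋ →L[ℂ] ℋ) lam - H := by
    rw [cfc_sub (fun _ : ℝ => lam) (fun t : ℝ => t) H continuousOn_const continuousOn_id,
      cfc_const lam H hH, cfc_id' ℝ H hH]
  have hid1 : (algebraMap ℝ (ℋ →L[ℂ] ℋ) lam - H) * cfc h H = cfc m H := by
    rw [← hE, ← cfc_mul (fun t : ℝ => lam - t) h H (continuous_const.sub continuous_id).continuousOn
      hhc.continuousOn]
    exact cfc_congr fun t _ => by rw [hh_def, hm_def]; simp only; rw [sq, mul_div_assoc]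
  have hid2 : (algebraMap ℝ (ℋ →L[ℂ] ℋ) lam - H) * (cfc m H - 1) = 0 := by
    have h1 : cfc m H - 1 = cfc (fun t => m t - 1) H := by
      rw [cfc_sub m (fun _ : ℝ => 1) H hmc.continuousOn continuousOn_const, cfc_const_one ℝ H hH]
    rw [h1, ← hE, ← cfc_mul (fun t : ℝ => lam - t) (fun t => m t - 1) H
      (continuous_const.sub continuous_id).continuousOn (hmc.sub continuous_const).continuousOn]
    rw [show (0 : ℋ →L[ℂ] ℋ) = cfc (fun _ : ℝ => (0:ℝ)) H from (cfc_const_zero ℝ H).symm]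
    apply cfc_congr
    intro t ht
    rcases eq_or_ne t lam with rfl | hne
    · simp
    · simp [hm1 t ht hne]
  -- algebraMap computation
  have hEapp : ∀ y : ℋ, (algebraMap ℝ (ℋ →L[ℂ] ℋ) lam - H) y = (lam : ℂ) • y - H y := by
    intro y
    have : algebraMap ℝ (ℋ →L[ℂ] ℋ) lam = algebraMap ℂ (ℋ →L[ℂ] ℋ) ((lam : ℝ) : ℂ) := by
      rw [IsScalarTower.algebraMap_apply ℝ ℂ (ℋ →L[ℂ] ℋ), Complex.coe_algebraMap]
    rw [ContinuousLinearMap.sub_apply, this, Algebra.algebraMap_eq_smul_one,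
      ContinuousLinearMap.smul_apply, ContinuousLinearMap.one_apply]
  -- cfc of real functions maps K into K
  have hmaps : ∀ f : ℝ → ℝ, Continuous f → ∀ x ∈ K, cfc f H x ∈ K := by
    intro f hf x hx
    have hT : IsSelfAdjoint (cfc f H) := cfc_predicate f H
    have hc1 : cfc f H * H = cfc (fun t : ℝ => f t * t) H := by
      rw [cfc_mul f (fun t : ℝ => t) H hf.continuousOn continuousOn_id, cfc_id' ℝ H hH]
    have hc2 : H * cfc f H = cfc (fun t : ℝ => t * f t) H := by
      rw [cfc_mul (fun t : ℝ => t) f H continuousOn_id hf.continuousOn, cfc_id' ℝ H hH]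
    have hcomm : cfc f H * H = H * cfc f H := by
      rw [hc1, hc2]
      exact cfc_congr fun t _ => mul_comm _ _
    have hTV : ∀ v ∈ V, cfc f H v ∈ V := by
      intro v hv
      rw [hmemV] at hv ⊢
      have : H (cfc f H v) = cfc f H (H v) := by
        rw [← ContinuousLinearMap.mul_apply, ← ContinuousLinearMap.mul_apply, hcomm]
      rw [this, hv, map_smul]
    exact key (cfc f H) hT.isSymmetric hTV x hx
  -- the operator to invert
  rw [spectrum.notMem_iff]
  set T : K →L[ℂ] K := algebraMap ℂ (K →L[ℂ] K) ((lam : ℝ) : ℂ) - H' with hT_def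
  have hTapp : ∀ x : K, (T x : ℋ) = (lam : ℂ) • (x : ℋ) - H (x : ℋ) := by
    intro x
    rw [hT_def]
    simp only [ContinuousLinearMap.sub_apply, Algebra.algebraMap_eq_smul_one,
      ContinuousLinearMap.smul_apply, ContinuousLinearMap.one_apply]
    rw [Submodule.coe_sub, Submodule.coe_smul, hcoe x]
  -- injectivity
  have hker : LinearMap.ker (T : K →ₗ[ℂ] K) = ⊥ := by
    rw [Submodule.eq_bot_iff]
    intro x hx
    rw [LinearMap.mem_ker, ContinuousLinearMap.coe_coe] at hx
    have h0 : (lam : ℂ) • (x : ℋ) - H (x : ℋ) = 0 := by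
      rw [← hTapp x, hx, Submodule.coe_zero]
    have hxV : (x : ℋ) ∈ V := by
      rw [hmemV]
      rw [sub_eq_zero] at h0
      exact h0.symm
    have hxK : (x : ℋ) ∈ Vᗮ := hK ▸ x.2
    have : (x : ℋ) = 0 := by
      have := Submodule.mem_orthogonal V (x : ℋ) |>.mp hxK (x : ℋ) hxV
      rwa [inner_self_eq_zero] at this
    exact Subtype.ext this
  -- surjectivity
  have hrange : LinearMap.range (T : K →ₗ[ℂ] K) = ⊤ := by
    rw [LinearMap.range_eq_top]
    intro y
    have hz : cfc h H (y : ℋ) ∈ K := hmaps h hhc (y : ℋ) y.2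
    refine ⟨⟨cfc h H (y : ℋ), hz⟩, ?_⟩
    apply Subtype.ext
    have e1 : (T ⟨cfc h H (y : ℋ), hz⟩ : ℋ) = cfc m H (y : ℋ) := by
      rw [hTapp, ← hEapp, ← ContinuousLinearMap.mul_apply, hid1]
    have e2 : cfc m H (y : ℋ) = (y : ℋ) := by
      set w : ℋ := cfc m H (y : ℋ) - (y : ℋ) with hw_def
      have hwV : w ∈ V := by
        rw [hmemV]
        have : (algebraMap ℝ (ℋ →L[ℂ] ℋ) lam - H) w = 0 := by
          have : w = (cfc m H - 1) (y : ℋ) := by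
            rw [hw_def]
            simp [ContinuousLinearMap.sub_apply]
          rw [this, ← ContinuousLinearMap.mul_apply, hid2, ContinuousLinearMap.zero_apply]
        rw [hEapp] at this
        rw [sub_eq_zero] at this
        exact this.symm
      have hwK : w ∈ K := by
        exact Submodule.sub_mem K (hmaps m hmc (y : ℋ) y.2) y.2
      have hwK' : w ∈ Vᗮ := hK ▸ hwK
      have : w = 0 := by
        have := Submodule.mem_orthogonal V w |>.mp hwK' w hwV
        rwa [inner_self_eq_zero] at this
      rw [hw_def] at this
      exact sub_eq_zero.mp this
    rw [ContinuousLinearMap.coe_coe, e1, e2]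
  -- conclude
  let e := ContinuousLinearEquiv.ofBijective T hker hrange
  refine ⟨⟨T, (e.symm : K →L[ℂ] K), ?_, ?_⟩, rfl⟩
  · refine ContinuousLinearMap.ext fun x => ?_
    show T (e.symm x) = x
    exact ContinuousLinearEquiv.ofBijective_apply_symm_apply T hker hrange x
  · refine ContinuousLinearMap.ext fun x => ?_
    show e.symm (T x) = x
    exact ContinuousLinearEquiv.ofBijective_symm_apply_apply T hker hrange x
end

section
/- (Sokhotski–Plemelj formula.) Let λ ∈ ℝ, let α ∈ (0, 1], and let φ : ℝ → ℝ be a bounded measurable real-valued function with compact support satisfying the Hölder condition |φ(x) − φ(λ)| ≤ C·|x−λ|^α for all x ∈ ℝ. Then there exists L ∈ ℂ such that ∫_ℝ φ(x)/(x − λ − iy) dx tends to L as y → 0 from the right, and the imaginary part of L equals π · φ(λ). -/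
open Filter Topology MeasureTheory

lemma sp_tendsto_aux (c : ℂ) :
    Tendsto (fun y : ℝ => c - (y : ℂ) * Complex.I) (𝓝 0) (𝓝 c) := by
  have h : Continuous fun y : ℝ => c - (y : ℂ) * Complex.I :=
    continuous_const.sub (Complex.continuous_ofReal.mul continuous_const)
  simpa using h.tendsto 0

lemma sp_log_limit (R : ℝ) (hR0 : 0 < R) :
    Tendsto (fun y : ℝ => Complex.log ((R : ℂ) - y * Complex.I)
        - Complex.log ((-R : ℂ) - y * Complex.I)) (𝓝[>] 0)
      (𝓝 ((Real.pi : ℂ) * Complex.I)) := by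
  have h1 : Tendsto (fun y : ℝ => Complex.log ((R : ℂ) - y * Complex.I)) (𝓝[>] 0)
      (𝓝 (Complex.log (R : ℂ))) := by
    have hc : ContinuousAt Complex.log (R : ℂ) :=
      continuousAt_clog (by simp [Complex.slitPlane, hR0])
    exact hc.tendsto.comp ((sp_tendsto_aux (R : ℂ)).mono_left nhdsWithin_le_nhds)
  have h2 : Tendsto (fun y : ℝ => Complex.log ((-R : ℂ) - y * Complex.I)) (𝓝[>] 0)
      (𝓝 ((Real.log R : ℂ) - Real.pi * Complex.I)) := by
    have hlog := Complex.tendsto_log_nhdsWithin_im_neg_of_re_neg_of_im_zero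
      (z := (-R : ℂ)) (by simpa using hR0) (by simp)
    have hm : Tendsto (fun y : ℝ => (-R : ℂ) - y * Complex.I) (𝓝[>] 0)
        (𝓝[{z : ℂ | z.im < 0}] (-R : ℂ)) := by
      rw [tendsto_nhdsWithin_iff]
      constructor
      · exact (sp_tendsto_aux (-R : ℂ)).mono_left nhdsWithin_le_nhds
      · filter_upwards [self_mem_nhdsWithin] with y (hy : 0 < y)
        simp [Complex.sub_im, hy]
    have := hlog.comp hm
    simpa [Complex.norm_real, Function.comp_def, abs_of_pos hR0] using this
  have := h1.sub h2
  rw [← Complex.ofReal_log hR0.le] at this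
  simpa using this

lemma sp_denom_ne (lam y x : ℝ) (hy : y ≠ 0) : ((x : ℂ) - lam - y * Complex.I) ≠ 0 := by
  intro h
  have := congrArg Complex.im h
  simp [Complex.sub_im, Complex.mul_im] at this
  exact hy this

lemma sp_ftc (lam R y : ℝ) (hy : 0 < y) :
    ∫ x in (lam - R)..(lam + R), ((x : ℂ) - lam - y * Complex.I)⁻¹
      = Complex.log ((R : ℂ) - y * Complex.I) - Complex.log ((-R : ℂ) - y * Complex.I) := by
  have hder : ∀ x ∈ Set.uIcc (lam - R) (lam + R),
      HasDerivAt (fun t : ℝ => Complex.log ((t : ℂ) - lam - y * Complex.I))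
        (((x : ℂ) - lam - y * Complex.I)⁻¹) x := by
    intro x _
    have hin : HasDerivAt (fun t : ℝ => ((t : ℂ) - lam - y * Complex.I)) 1 x := by
      have := (Complex.ofRealCLM.hasDerivAt (x := x)).sub_const ((lam : ℂ) + y * Complex.I)
      simpa [sub_sub] using this
    have hmem : ((x : ℂ) - lam - y * Complex.I) ∈ Complex.slitPlane := by
      refine Or.inr ?_
      simp [Complex.sub_im, Complex.mul_im, hy.ne']
    simpa using hin.clog_real hmem
  have hcont : IntervalIntegrable (fun x : ℝ => ((x : ℂ) - lam - y * Complex.I)⁻¹)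
      MeasureTheory.volume (lam - R) (lam + R) := by
    apply Continuous.intervalIntegrable
    exact ((Complex.continuous_ofReal.sub continuous_const).sub continuous_const).inv₀
      fun x => by simpa [sub_sub] using sp_denom_ne lam y x hy.ne'
  have := intervalIntegral.integral_eq_sub_of_hasDerivAt hder hcont
  rw [this]
  congr 2 <;> push_cast <;> ring

lemma sp_bound_integrable (lam R C α : ℝ) (hR : 0 < R) (hα : 0 < α) :
    IntegrableOn (fun x : ℝ => C * |x - lam| ^ (α - 1)) (Set.Icc (lam - R) (lam + R)) := by
  apply Integrable.const_mul
  have base : IntervalIntegrable (fun x : ℝ => x ^ (α - 1)) volume 0 R :=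
    intervalIntegral.intervalIntegrable_rpow' (by linarith)
  have hright : IntegrableOn (fun x : ℝ => |x - lam| ^ (α - 1)) (Set.Ioc lam (lam + R)) := by
    have h1 : IntervalIntegrable (fun x : ℝ => (x - lam) ^ (α - 1)) volume lam (lam + R) := by
      simpa [add_comm] using base.comp_sub_right lam
    have h2 := (intervalIntegrable_iff_integrableOn_Ioc_of_le (by linarith)).mp h1
    apply h2.congr_fun ?_ measurableSet_Ioc
    intro x hx
    show (x - lam) ^ (α - 1) = |x - lam| ^ (α - 1)
    rw [abs_of_pos (sub_pos.mpr hx.1)]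
  have hleft : IntegrableOn (fun x : ℝ => |x - lam| ^ (α - 1)) (Set.Ioc (lam - R) lam) := by
    have h1 : IntervalIntegrable (fun x : ℝ => (lam - x) ^ (α - 1)) volume (lam - R) lam := by
      simpa using (base.comp_sub_left lam).symm
    have h2 := (intervalIntegrable_iff_integrableOn_Ioc_of_le (by linarith)).mp h1
    apply h2.congr_fun ?_ measurableSet_Ioc
    intro x hx
    show (lam - x) ^ (α - 1) = |x - lam| ^ (α - 1)
    rw [abs_sub_comm, abs_of_nonneg (by linarith [hx.2])]
  have h := hleft.union hright
  rw [Set.Ioc_union_Ioc_eq_Ioc (by linarith) (by linarith)] at h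
  exact (integrableOn_Icc_iff_integrableOn_Ioc).mpr h


/-- Sokhotski–Plemelj formula: if `φ : ℝ → ℝ` is bounded, measurable, compactly supported
and Hölder at `lam` with exponent `α ∈ (0, 1]`, then `∫ φ(x) / (x - lam - i y) dx` converges
to some `L ∈ ℂ` as `y → 0⁺`, and `Im L = π · φ(lam)`. -/
theorem sokhotski_plemelj
    (lam : ℝ) (α : ℝ) (hα : α ∈ Set.Ioc (0 : ℝ) 1)
    (φ : ℝ → ℝ) (hmeas : Measurable φ)
    (hbdd : ∃ M : ℝ, ∀ x : ℝ, |φ x| ≤ M) (hsupp : HasCompactSupport φ)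
    (C : ℝ) (hC : 0 ≤ C)
    (hHolder : ∀ x : ℝ, |φ x - φ lam| ≤ C * |x - lam| ^ α) :
    ∃ L : ℂ,
      Tendsto
        (fun y : ℝ => ∫ x : ℝ, (φ x : ℂ) / ((x : ℂ) - (lam : ℂ) - (y : ℂ) * Complex.I))
        (𝓝[>] 0) (𝓝 L) ∧
      L.im = Real.pi * φ lam := by
  obtain ⟨hα0, hα1⟩ := hα
  obtain ⟨M, hM⟩ := hbdd
  -- find R
  obtain ⟨r, hr⟩ := hsupp.isBounded.subset_closedBall lam
  set R : ℝ := max r 1 with hRdef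
  have hR0 : (0 : ℝ) < R := lt_of_lt_of_le one_pos (le_max_right _ _)
  set I : Set ℝ := Set.Icc (lam - R) (lam + R) with hIdef
  have hIsub : tsupport φ ⊆ I := by
    refine hr.trans ?_
    rw [Real.closedBall_eq_Icc]
    have hrR : r ≤ R := le_max_left _ _
    exact Set.Icc_subset_Icc (by linarith) (by linarith)
  -- measurability of denominators
  have hmden : ∀ y : ℝ, Measurable fun x : ℝ => ((x : ℂ) - lam - y * Complex.I) :=
    fun y => (Complex.measurable_ofReal.sub measurable_const).sub measurable_const
  -- full integrand restricted to I
  have eq_full : ∀ y : ℝ,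
      (∫ x : ℝ, (φ x : ℂ) / ((x : ℂ) - lam - y * Complex.I))
        = ∫ x in I, (φ x : ℂ) / ((x : ℂ) - lam - y * Complex.I) := by
    intro y
    refine (setIntegral_eq_integral_of_forall_compl_eq_zero fun x hx => ?_).symm
    have : φ x = 0 := image_eq_zero_of_notMem_tsupport fun h => hx (hIsub h)
    simp [this]
  -- integrability of full integrand on I for y > 0
  have hM0 : 0 ≤ M := le_trans (abs_nonneg _) (hM lam)
  have habs_den : ∀ y : ℝ, 0 < y → ∀ x : ℝ,
      y ≤ ‖(x : ℂ) - lam - y * Complex.I‖ := by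
    intro y hy x
    have h := Complex.abs_im_le_norm ((x : ℂ) - lam - y * Complex.I)
    have him : ((x : ℂ) - lam - y * Complex.I).im = -y := by
      simp [Complex.sub_im, Complex.mul_im]
    rw [him, abs_neg, abs_of_pos hy] at h
    exact h
  have hfull : ∀ y : ℝ, 0 < y →
      IntegrableOn (fun x : ℝ => (φ x : ℂ) / ((x : ℂ) - lam - y * Complex.I)) I := by
    intro y hy
    refine Integrable.mono' (g := fun _ => M / y)
      (integrableOn_const measure_Icc_lt_top.ne)
      ((Complex.measurable_ofReal.comp hmeas).div (hmden y)).aestronglyMeasurable ?_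
    refine Eventually.of_forall fun x => ?_
    rw [norm_div]
    have h1 : ‖(φ x : ℂ)‖ = |φ x| := by rw [Complex.norm_real, Real.norm_eq_abs]
    have h2 : ‖(x : ℂ) - lam - y * Complex.I‖ = ‖(x : ℂ) - lam - y * Complex.I‖ := rfl
    rw [h1, h2]
    exact div_le_div₀ hM0 (hM x) hy (habs_den y hy x)
  -- integrability of constant piece on I for y > 0
  have hp2int : ∀ y : ℝ, 0 < y →
      IntegrableOn (fun x : ℝ => (φ lam : ℂ) / ((x : ℂ) - lam - y * Complex.I)) I := by
    intro y hy
    refine Continuous.integrableOn_Icc ?_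
    exact continuous_const.div
      ((Complex.continuous_ofReal.sub continuous_const).sub continuous_const)
      (fun x => sp_denom_ne lam y x hy.ne')
  -- integrability of Hölder piece on I for y > 0
  have hp1int : ∀ y : ℝ, 0 < y →
      IntegrableOn (fun x : ℝ => ((φ x : ℂ) - φ lam) / ((x : ℂ) - lam - y * Complex.I)) I := by
    intro y hy
    have := (hfull y hy).sub (hp2int y hy)
    refine this.congr (Eventually.of_forall fun x => ?_)
    simp only [Pi.sub_apply]
    rw [div_sub_div_same]
  -- splitting identity
  have hsplit : ∀ y : ℝ, 0 < y →
      (∫ x : ℝ, (φ x : ℂ) / ((x : ℂ) - lam - y * Complex.I))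
        = (∫ x in I, ((φ x : ℂ) - φ lam) / ((x : ℂ) - lam - y * Complex.I))
          + ∫ x in I, (φ lam : ℂ) / ((x : ℂ) - lam - y * Complex.I) := by
    intro y hy
    rw [eq_full y, ← integral_add (hp1int y hy) (hp2int y hy)]
    congr 1
    funext x
    rw [← add_div, sub_add_cancel]
  -- a.e. x ≠ lam
  have hae : ∀ᵐ x : ℝ ∂(volume.restrict I), x ≠ lam := by
    refine ae_restrict_of_ae ?_
    rw [ae_iff]
    simp only [not_not, Set.setOf_eq_eq_singleton]
    exact Real.volume_singleton
  -- T1 : Hölder piece tends to A by dominated convergence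
  set A : ℂ := ∫ x in I, ((φ x : ℂ) - φ lam) / ((x : ℂ) - lam) with hAdef
  have T1 : Tendsto
      (fun y : ℝ => ∫ x in I, ((φ x : ℂ) - φ lam) / ((x : ℂ) - lam - y * Complex.I))
      (𝓝[>] 0) (𝓝 A) := by
    refine tendsto_integral_filter_of_dominated_convergence
      (fun x => C * |x - lam| ^ (α - 1)) ?_ ?_ ?_ ?_
    · refine Eventually.of_forall fun y => ?_
      exact (((Complex.measurable_ofReal.comp hmeas).sub measurable_const).div
        (hmden y)).aestronglyMeasurable
    · filter_upwards [self_mem_nhdsWithin] with y (hy : 0 < y)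
      filter_upwards [hae] with x hx
      have hpos : 0 < |x - lam| := abs_pos.mpr (sub_ne_zero.mpr hx)
      have habs : |x - lam| ≤ ‖(x : ℂ) - lam - y * Complex.I‖ := by
        have h := Complex.abs_re_le_norm ((x : ℂ) - lam - y * Complex.I)
        have hre : ((x : ℂ) - lam - y * Complex.I).re = x - lam := by
          simp [Complex.sub_re, Complex.mul_re]
        rwa [hre] at h
      have h1 : ‖((φ x : ℂ) - φ lam) / ((x : ℂ) - lam - y * Complex.I)‖
          = |φ x - φ lam| / ‖(x : ℂ) - lam - y * Complex.I‖ := by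
        rw [norm_div]
        congr 1
        rw [← Complex.ofReal_sub, Complex.norm_real, Real.norm_eq_abs]
      rw [h1]
      calc |φ x - φ lam| / ‖(x : ℂ) - lam - y * Complex.I‖
          ≤ |φ x - φ lam| / |x - lam| :=
            div_le_div_of_nonneg_left (abs_nonneg _) hpos habs
        _ ≤ (C * |x - lam| ^ α) / |x - lam| := by
            gcongr
            exact hHolder x
        _ = C * |x - lam| ^ (α - 1) := by
            rw [Real.rpow_sub hpos, Real.rpow_one, mul_div_assoc]
    · exact sp_bound_integrable lam R C α hR0 hα0
    · filter_upwards [hae] with x hx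
      have hne : ((x : ℂ) - lam) ≠ 0 := sub_ne_zero.mpr (by exact_mod_cast hx)
      have hden : Tendsto (fun y : ℝ => (x : ℂ) - lam - y * Complex.I) (𝓝[>] 0)
          (𝓝 ((x : ℂ) - lam)) :=
        (sp_tendsto_aux ((x : ℂ) - (lam : ℂ))).mono_left nhdsWithin_le_nhds
      exact tendsto_const_nhds.div hden hne
  -- T2 : constant piece tends to φ(lam) * π i
  have T2 : Tendsto
      (fun y : ℝ => ∫ x in I, (φ lam : ℂ) / ((x : ℂ) - lam - y * Complex.I))
      (𝓝[>] 0) (𝓝 ((φ lam : ℂ) * ((Real.pi : ℂ) * Complex.I))) := by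
    have heq : ∀ᶠ (y : ℝ) in 𝓝[>] (0 : ℝ),
        (φ lam : ℂ) * (Complex.log ((R : ℂ) - y * Complex.I)
            - Complex.log ((-R : ℂ) - y * Complex.I))
          = ∫ x in I, (φ lam : ℂ) / ((x : ℂ) - lam - y * Complex.I) := by
      filter_upwards [self_mem_nhdsWithin] with y (hy : 0 < y)
      have h1 : (∫ x in I, (φ lam : ℂ) / ((x : ℂ) - lam - y * Complex.I))
          = (φ lam : ℂ) * ∫ x in I, ((x : ℂ) - lam - y * Complex.I)⁻¹ := by
        simp_rw [div_eq_mul_inv]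
        exact integral_const_mul _ _
      have h2 : (∫ x in I, ((x : ℂ) - lam - y * Complex.I)⁻¹)
          = ∫ x in (lam - R)..(lam + R), ((x : ℂ) - lam - y * Complex.I)⁻¹ := by
        rw [hIdef, MeasureTheory.integral_Icc_eq_integral_Ioc,
          intervalIntegral.integral_of_le (by linarith)]
      rw [h1, h2, sp_ftc lam R y hy]
    refine Tendsto.congr' heq ?_
    exact Filter.Tendsto.const_mul ((φ lam : ℂ)) (sp_log_limit R hR0)
  -- conclude
  refine ⟨A + (φ lam : ℂ) * ((Real.pi : ℂ) * Complex.I), ?_, ?_⟩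
  · refine Tendsto.congr' ?_ (T1.add T2)
    filter_upwards [self_mem_nhdsWithin] with y (hy : 0 < y)
    exact (hsplit y hy).symm
  · have hA : A.im = 0 := by
      have h1 : A = ∫ x in I, (((φ x - φ lam) / (x - lam) : ℝ) : ℂ) := by
        rw [hAdef]
        congr 1
        funext x
        push_cast
        ring
      have h2 : (∫ x in I, (((φ x - φ lam) / (x - lam) : ℝ) : ℂ))
          = ((∫ x in I, (φ x - φ lam) / (x - lam) : ℝ) : ℂ) := by
        simpa using integral_ofReal (𝕜 := ℂ)
          (f := fun x => (φ x - φ lam) / (x - lam)) (μ := volume.restrict I)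
      rw [h1, h2, Complex.ofReal_im]
    rw [Complex.add_im, hA, zero_add]
    simp [Complex.mul_im, Complex.mul_re]
    ring
end
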